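/- arXiv:2105.05530 — 3 statements merged into one kernel-verified Lean document; each statement's English description precedes it below -/
import Mathlib

section
/- Let c0, c1, c2 be pairwise distinct real numbers and let a0, a1, b0, b1, g0, g1, d0, d1 be nonzero real numbers. Define the 4×2 matrix A with rows (a0, −a0·c0), (b0, −b0·c1), (g0, −g0·c2), (0, d0); the 4×3 matrix G with rows (a1/((c1−c0)(c2−c0)))·(1, −c0, c0²), (b1/((c0−c1)(c2−c1)))·(1, −c1, c1²), (g1/((c0−c2)(c1−c2)))·(1, −c2, c2²), and (0, 0, d1); and the 4×4 matrix B whose columns are (1/(a0·a1))·(c1·c2, c1+c2, 1, 0), (1/(b0·b1))·(c0·c2, c0+c2, 1, 0), (1/(g0·g1))·(c0·c1, c0+c1, 1, 0), and (1/(d0·d1))·(c0·c1·c2, c0·c1+c0·c2+c1·c2, c0+c1+c2, 1). Then for every y ∈ ℝ² (indexed y_0, y_1) and every g ∈ ℝ³ (indexed g_0, g_1, g_2), the vector B · ((A·y) ⊙ (G·g)), where ⊙ denotes the entrywise (Hadamard) product of 4-vectors, equals the linear convolution d ∈ ℝ⁴ given by d_τ = Σ_t y_t · g_{τ−t}, where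 the sum runs over all integers t with 0 ≤ t ≤ 1 and 0 ≤ τ−t ≤ 2, for τ = 0, 1, 2, 3. -/
open Matrix

private lemma winograd_aux (k a b E p q : ℝ) (ha : a ≠ 0) (hb : b ≠ 0) :
    k / (a * b) * (a * p * (b * q / E)) = k * (p * q) / E :=
  calc k / (a * b) * (a * p * (b * q / E)) = (a*b)/(a*b) * (k*(p*q)/E) := by ring
  _ = k * (p * q) / E := by rw [div_self (mul_ne_zero ha hb), one_mul]

private lemma winograd_aux2 (k a b p q : ℝ) (ha : a ≠ 0) (hb : b ≠ 0) :
    k / (a * b) * (a * p * (b * q)) = k * (p * q) :=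
  calc k / (a * b) * (a * p * (b * q)) = (a*b)/(a*b) * (k*(p*q)) := by ring
  _ = k * (p * q) := by rw [div_self (mul_ne_zero ha hb), one_mul]

private lemma winograd_aux3 (a b E p q : ℝ) (ha : a ≠ 0) (hb : b ≠ 0) :
    b⁻¹ * a⁻¹ * (a * p * (b * q / E)) = p * q / E :=
  calc b⁻¹ * a⁻¹ * (a * p * (b * q / E)) = (a*b)/(a*b) * (p*q/E) := by ring
  _ = p * q / E := by rw [div_self (mul_ne_zero ha hb), one_mul]

private lemma winograd_key (c0 c1 c2 y0 y1 g0 g1 g2 : ℝ)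
    (h01 : c1 - c0 ≠ 0) (h02 : c2 - c0 ≠ 0) (h10 : c0 - c1 ≠ 0)
    (h12 : c2 - c1 ≠ 0) (h20 : c0 - c2 ≠ 0) (h21 : c1 - c2 ≠ 0) :
  (c1*c2*((y0 - c0*y1) * (g0 - c0*g1 + c0^2*g2)) / ((c1-c0)*(c2-c0))
  + c0*c2*((y0 - c1*y1) * (g0 - c1*g1 + c1^2*g2)) / ((c0-c1)*(c2-c1))
  + c0*c1*((y0 - c2*y1) * (g0 - c2*g1 + c2^2*g2)) / ((c0-c2)*(c1-c2))
  + c0*c1*c2*(y1*g2) = y0*g0)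
  ∧ ((c1+c2)*((y0 - c0*y1) * (g0 - c0*g1 + c0^2*g2)) / ((c1-c0)*(c2-c0))
  + (c0+c2)*((y0 - c1*y1) * (g0 - c1*g1 + c1^2*g2)) / ((c0-c1)*(c2-c1))
  + (c0+c1)*((y0 - c2*y1) * (g0 - c2*g1 + c2^2*g2)) / ((c0-c2)*(c1-c2))
  + (c0*c1+c0*c2+c1*c2)*(y1*g2) = y0*g1 + y1*g0)
  ∧ (((y0 - c0*y1) * (g0 - c0*g1 + c0^2*g2)) / ((c1-c0)*(c2-c0))
  + ((y0 - c1*y1) * (g0 - c1*g1 + c1^2*g2)) / ((c0-c1)*(c2-c1))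
  + ((y0 - c2*y1) * (g0 - c2*g1 + c2^2*g2)) / ((c0-c2)*(c1-c2))
  + (c0+c1+c2)*(y1*g2) = y0*g2 + y1*g1) := by
  refine ⟨?_, ?_, ?_⟩ <;> · field_simp; ring

/-- general Winograd `F(2,3)` solution, 1-D linear convolution form.
`B ⬝ ((A ⬝ y) ⊙ (G ⬝ g))` equals the linear convolution of `y` and `g`. -/
theorem winograd_F23_general_convolution
    (c0 c1 c2 : ℝ) (hc01 : c0 ≠ c1) (hc02 : c0 ≠ c2) (hc12 : c1 ≠ c2)
    (a0 a1 b0 b1 g0 g1 d0 d1 : ℝ)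
    (ha0 : a0 ≠ 0) (ha1 : a1 ≠ 0) (hb0 : b0 ≠ 0) (hb1 : b1 ≠ 0)
    (hg0 : g0 ≠ 0) (hg1 : g1 ≠ 0) (hd0 : d0 ≠ 0) (hd1 : d1 ≠ 0)
    (A : Matrix (Fin 4) (Fin 2) ℝ)
    (hA : A = !![a0, -a0 * c0; b0, -b0 * c1; g0, -g0 * c2; 0, d0])
    (G : Matrix (Fin 4) (Fin 3) ℝ)
    (hG : G = !![a1 / ((c1 - c0) * (c2 - c0)), -(a1 * c0) / ((c1 - c0) * (c2 - c0)),
                   (a1 * c0 ^ 2) / ((c1 - c0) * (c2 - c0));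
                 b1 / ((c0 - c1) * (c2 - c1)), -(b1 * c1) / ((c0 - c1) * (c2 - c1)),
                   (b1 * c1 ^ 2) / ((c0 - c1) * (c2 - c1));
                 g1 / ((c0 - c2) * (c1 - c2)), -(g1 * c2) / ((c0 - c2) * (c1 - c2)),
                   (g1 * c2 ^ 2) / ((c0 - c2) * (c1 - c2));
                 0, 0, d1])
    (B : Matrix (Fin 4) (Fin 4) ℝ)
    (hB : B = !![c1 * c2 / (a0 * a1), c0 * c2 / (b0 * b1), c0 * c1 / (g0 * g1),
                   c0 * c1 * c2 / (d0 * d1);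
                 (c1 + c2) / (a0 * a1), (c0 + c2) / (b0 * b1), (c0 + c1) / (g0 * g1),
                   (c0 * c1 + c0 * c2 + c1 * c2) / (d0 * d1);
                 1 / (a0 * a1), 1 / (b0 * b1), 1 / (g0 * g1),
                   (c0 + c1 + c2) / (d0 * d1);
                 0, 0, 0, 1 / (d0 * d1)])
    (y : Fin 2 → ℝ) (g : Fin 3 → ℝ) :
    B.mulVec (fun i => (A.mulVec y) i * (G.mulVec g) i) =
      fun τ : Fin 4 => ∑ t : Fin 2, ∑ r : Fin 3,
        if (t : ℕ) + (r : ℕ) = (τ : ℕ) then y t * g r else 0 := by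
  subst hA hG hB
  have h01 : c1 - c0 ≠ 0 := sub_ne_zero.mpr (Ne.symm hc01)
  have h02 : c2 - c0 ≠ 0 := sub_ne_zero.mpr (Ne.symm hc02)
  have h10 : c0 - c1 ≠ 0 := sub_ne_zero.mpr hc01
  have h12 : c2 - c1 ≠ 0 := sub_ne_zero.mpr (Ne.symm hc12)
  have h20 : c0 - c2 ≠ 0 := sub_ne_zero.mpr hc02
  have h21 : c1 - c2 ≠ 0 := sub_ne_zero.mpr hc12
  obtain ⟨k0, k1, k2⟩ := winograd_key c0 c1 c2 (y 0) (y 1) (g 0) (g 1) (g 2)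
    h01 h02 h10 h12 h20 h21
  funext τ
  fin_cases τ
  · simp [mulVec, dotProduct, Fin.sum_univ_succ]
    rw [show (a0 * y 0 + -(a0 * c0 * y 1)) = a0 * (y 0 - c0 * y 1) from by ring,
        show (a1 / ((c1 - c0) * (c2 - c0)) * g 0 +
            (-(a1 * c0) / ((c1 - c0) * (c2 - c0)) * g 1 +
              a1 * c0 ^ 2 / ((c1 - c0) * (c2 - c0)) * g 2)) =
          a1 * (g 0 - c0 * g 1 + c0 ^ 2 * g 2) / ((c1 - c0) * (c2 - c0)) from by ring,
        show (b0 * y 0 + -(b0 * c1 * y 1)) = b0 * (y 0 - c1 * y 1) from by ring,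
        show (b1 / ((c0 - c1) * (c2 - c1)) * g 0 +
            (-(b1 * c1) / ((c0 - c1) * (c2 - c1)) * g 1 +
              b1 * c1 ^ 2 / ((c0 - c1) * (c2 - c1)) * g 2)) =
          b1 * (g 0 - c1 * g 1 + c1 ^ 2 * g 2) / ((c0 - c1) * (c2 - c1)) from by ring,
        show (g0 * y 0 + -(g0 * c2 * y 1)) = g0 * (y 0 - c2 * y 1) from by ring,
        show (g1 / ((c0 - c2) * (c1 - c2)) * g 0 +
            (-(g1 * c2) / ((c0 - c2) * (c1 - c2)) * g 1 +
              g1 * c2 ^ 2 / ((c0 - c2) * (c1 - c2)) * g 2)) =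
          g1 * (g 0 - c2 * g 1 + c2 ^ 2 * g 2) / ((c0 - c2) * (c1 - c2)) from by ring,
        winograd_aux _ a0 a1 _ _ _ ha0 ha1,
        winograd_aux _ b0 b1 _ _ _ hb0 hb1,
        winograd_aux _ g0 g1 _ _ _ hg0 hg1,
        winograd_aux2 _ d0 d1 _ _ hd0 hd1]
    linear_combination k0
  · simp [mulVec, dotProduct, Fin.sum_univ_succ]
    rw [show (a0 * y 0 + -(a0 * c0 * y 1)) = a0 * (y 0 - c0 * y 1) from by ring,
        show (a1 / ((c1 - c0) * (c2 - c0)) * g 0 +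
            (-(a1 * c0) / ((c1 - c0) * (c2 - c0)) * g 1 +
              a1 * c0 ^ 2 / ((c1 - c0) * (c2 - c0)) * g 2)) =
          a1 * (g 0 - c0 * g 1 + c0 ^ 2 * g 2) / ((c1 - c0) * (c2 - c0)) from by ring,
        show (b0 * y 0 + -(b0 * c1 * y 1)) = b0 * (y 0 - c1 * y 1) from by ring,
        show (b1 / ((c0 - c1) * (c2 - c1)) * g 0 +
            (-(b1 * c1) / ((c0 - c1) * (c2 - c1)) * g 1 +
              b1 * c1 ^ 2 / ((c0 - c1) * (c2 - c1)) * g 2)) =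
          b1 * (g 0 - c1 * g 1 + c1 ^ 2 * g 2) / ((c0 - c1) * (c2 - c1)) from by ring,
        show (g0 * y 0 + -(g0 * c2 * y 1)) = g0 * (y 0 - c2 * y 1) from by ring,
        show (g1 / ((c0 - c2) * (c1 - c2)) * g 0 +
            (-(g1 * c2) / ((c0 - c2) * (c1 - c2)) * g 1 +
              g1 * c2 ^ 2 / ((c0 - c2) * (c1 - c2)) * g 2)) =
          g1 * (g 0 - c2 * g 1 + c2 ^ 2 * g 2) / ((c0 - c2) * (c1 - c2)) from by ring,
        winograd_aux _ a0 a1 _ _ _ ha0 ha1,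
        winograd_aux _ b0 b1 _ _ _ hb0 hb1,
        winograd_aux _ g0 g1 _ _ _ hg0 hg1,
        winograd_aux2 _ d0 d1 _ _ hd0 hd1]
    linear_combination k1
  · simp [mulVec, dotProduct, Fin.sum_univ_succ]
    rw [show (a0 * y 0 + -(a0 * c0 * y 1)) = a0 * (y 0 - c0 * y 1) from by ring,
        show (a1 / ((c1 - c0) * (c2 - c0)) * g 0 +
            (-(a1 * c0) / ((c1 - c0) * (c2 - c0)) * g 1 +
              a1 * c0 ^ 2 / ((c1 - c0) * (c2 - c0)) * g 2)) =
          a1 * (g 0 - c0 * g 1 + c0 ^ 2 * g 2) / ((c1 - c0) * (c2 - c0)) from by ring,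
        show (b0 * y 0 + -(b0 * c1 * y 1)) = b0 * (y 0 - c1 * y 1) from by ring,
        show (b1 / ((c0 - c1) * (c2 - c1)) * g 0 +
            (-(b1 * c1) / ((c0 - c1) * (c2 - c1)) * g 1 +
              b1 * c1 ^ 2 / ((c0 - c1) * (c2 - c1)) * g 2)) =
          b1 * (g 0 - c1 * g 1 + c1 ^ 2 * g 2) / ((c0 - c1) * (c2 - c1)) from by ring,
        show (g0 * y 0 + -(g0 * c2 * y 1)) = g0 * (y 0 - c2 * y 1) from by ring,
        show (g1 / ((c0 - c2) * (c1 - c2)) * g 0 +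
            (-(g1 * c2) / ((c0 - c2) * (c1 - c2)) * g 1 +
              g1 * c2 ^ 2 / ((c0 - c2) * (c1 - c2)) * g 2)) =
          g1 * (g 0 - c2 * g 1 + c2 ^ 2 * g 2) / ((c0 - c2) * (c1 - c2)) from by ring,
        winograd_aux3 a0 a1 _ _ _ ha0 ha1,
        winograd_aux3 b0 b1 _ _ _ hb0 hb1,
        winograd_aux3 g0 g1 _ _ _ hg0 hg1,
        winograd_aux2 _ d0 d1 _ _ hd0 hd1]
    linear_combination k2
  · simp [mulVec, dotProduct, Fin.sum_univ_succ]
    rw [show d1⁻¹ * d0⁻¹ * (d0 * y 1 * (d1 * g 2))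
          = (d0 * d0⁻¹) * ((d1 * d1⁻¹) * (y 1 * g 2)) from by ring,
        mul_inv_cancel₀ hd0, mul_inv_cancel₀ hd1, one_mul, one_mul]
end

section
/- Let k be an integer, let ι be an index type, and let p : ι → ℤ. Then the following are equivalent: (1) for all i, j, m, n in ι, p_i·p_j + (k − p_i)·(k − p_j) = p_m·p_n + (k − p_m)·(k − p_n); (2) for all i, j in ι, p_i = p_j. (In the application, each column of the output transform matrix A has exactly k nonzero entries, each equal to +1 or −1, p_i is the number of +1 entries in column i, and p_i·p_j + (k−p_i)·(k−p_j) counts the addition terms (positively signed products) arising when the output feature Y_{i,j} = (AᵀXA)_{i,j} is expanded; the equivalence says the numbers of additions and of minus operations in the computation of Y_{i,j} and Y_{m,n} are equal for all i, j, m, n if and only if all the p_i are equal.) -/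
/-- Theorem 2 of the paper: for `p : ι → ℤ` and `k : ℤ`, the counts
`p i * p j + (k - p i) * (k - p j)` of positively signed terms in the expansion of
the output features agree for all index pairs if and only if all the `p i` are equal. -/
theorem adder_winograd_balance_iff (k : ℤ) (ι : Type*) (p : ι → ℤ) :
    (∀ i j m n : ι,
        p i * p j + (k - p i) * (k - p j) = p m * p n + (k - p m) * (k - p n)) ↔
      (∀ i j : ι, p i = p j) := by
  constructor
  · intro h i j
    have h1 := h i i i j
    have h2 := h j j i j
    nlinarith [sq_nonneg (p i - p j)]
  · intro h i j m n
    rw [h i m, h j n]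
end

section
/- Let A be the 4×2 real matrix with rows (1,0), (1,1), (1,−1), (0,−1); let G be the 4×3 real matrix with rows (1,0,0), (1/2,1/2,1/2), (1/2,−1/2,1/2), (0,0,1); and let B be the 4×4 real matrix with rows (1,0,0,0), (0,1,−1,1), (−1,1,1,0), (0,0,0,−1). There exist a 3×3 real matrix g and a 4×4 real matrix d such that the 2×2 matrix Aᵀ·(−|G·g·Gᵀ ⊖ Bᵀ·d·B|)·A, where ⊖ denotes entrywise subtraction and |·| denotes the entrywise absolute value of a 4×4 matrix, is NOT equal to the 2×2 adder output Y given by Y_{m,n} = −Σ_{i=0}^{2} Σ_{j=0}^{2} |g_{i,j} − d_{m+i, n+j}| for m, n ∈ {0, 1}. -/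
open Matrix

/-- the vanilla Winograd form for AdderNet, obtained by replacing
elementwise multiplication with the negated elementwise ℓ1-distance, is not equal
to the original adder operation: there exist a filter `g` and an input tile `d`
witnessing the inequality. -/
theorem winograd_adder_not_exact
    (A : Matrix (Fin 4) (Fin 2) ℝ)
    (hA : A = !![1, 0; 1, 1; 1, -1; 0, -1])
    (G : Matrix (Fin 4) (Fin 3) ℝ)
    (hG : G = !![1, 0, 0; 1/2, 1/2, 1/2; 1/2, -1/2, 1/2; 0, 0, 1])
    (B : Matrix (Fin 4) (Fin 4) ℝ)
    (hB : B = !![1, 0, 0, 0; 0, 1, -1, 1; -1, 1, 1, 0; 0, 0, 0, -1]) :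
    ∃ (g : Matrix (Fin 3) (Fin 3) ℝ) (d : Matrix (Fin 4) (Fin 4) ℝ),
      Aᵀ * (Matrix.of fun i j : Fin 4 =>
          -|(G * g * Gᵀ - Bᵀ * d * B) i j|) * A ≠
        Matrix.of (fun m n : Fin 2 => -∑ i : Fin 3, ∑ j : Fin 3,
          |g i j - d ⟨(m : ℕ) + (i : ℕ), by omega⟩ ⟨(n : ℕ) + (j : ℕ), by omega⟩|) := by
  subst hA hG hB
  refine ⟨Matrix.of (fun _ _ => (1 : ℝ)), 0, fun h => ?_⟩
  have := congrFun (congrFun h 0) 1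
  simp only [Matrix.mul_apply, Matrix.of_apply, Matrix.transpose_apply,
    Fin.sum_univ_succ, Finset.sum_const, Finset.card_univ, Fintype.card_fin,
    Matrix.sub_apply, Matrix.zero_apply, Matrix.cons_val_zero,
    Matrix.cons_val_succ, Finset.univ_unique, Finset.sum_singleton,
    Fin.sum_univ_zero] at this
  norm_num [abs_of_nonneg, abs_of_nonpos, Matrix.cons_val_zero, Matrix.cons_val_succ,
    Matrix.cons_val_one, Matrix.head_cons, Matrix.cons_val_fin_one, Matrix.cons_val_two] at this
end
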